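/- If an algorithm is ε-differentially private (pure DP), then for every α > 1 it is (α, ½ε²α)-Rényi differentially private, i.e., the Rényi divergence of order α between outputs on neighboring datasets is at most αε²/2. -/

import Mathlib

open MeasureTheory Real

lemma sinh_le_mul_cosh {t : ℝ} (ht : 0 ≤ t) : Real.sinh t ≤ t * Real.cosh t := by
  have hmono : MonotoneOn (fun s : ℝ => s * Real.cosh s - Real.sinh s) (Set.Ici 0) := by
    apply monotoneOn_of_deriv_nonneg (convex_Ici 0)
    · exact ((continuous_id.mul Real.continuous_cosh).sub Real.continuous_sinh).continuousOn
    · intro s _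
      exact (((differentiable_id.mul Real.differentiable_cosh).sub
        Real.differentiable_sinh) s).differentiableWithinAt
    · intro s hs
      rw [interior_Ici, Set.mem_Ioi] at hs
      have hd : HasDerivAt (fun s : ℝ => s * Real.cosh s - Real.sinh s)
          (1 * Real.cosh s + s * Real.sinh s - Real.cosh s) s :=
        ((hasDerivAt_id s).mul (Real.hasDerivAt_cosh s)).sub (Real.hasDerivAt_sinh s)
      rw [hd.deriv]
      have : 0 ≤ Real.sinh s := Real.sinh_nonneg_iff.2 hs.le
      nlinarith
  have := hmono (Set.self_mem_Ici) (Set.mem_Ici.2 ht) ht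
  simpa using this

lemma cosh_mul_le {x c d : ℝ} (hx : 0 ≤ x) (hd : 0 ≤ d) (hdc : d ≤ c) :
    Real.cosh (c * x) ≤ Real.cosh (d * x) * Real.exp ((c ^ 2 - d ^ 2) * x ^ 2 / 2) := by
  have hanti : AntitoneOn (fun s : ℝ => Real.log (Real.cosh (s * x)) - s ^ 2 * x ^ 2 / 2)
      (Set.Ici 0) := by
    apply antitoneOn_of_deriv_nonpos (convex_Ici 0)
    · apply ContinuousOn.sub
      · exact (Real.continuous_cosh.comp (continuous_id.mul continuous_const)).continuousOn.log
          (fun s _ => (Real.cosh_pos _).ne')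
      · exact (continuous_pow 2 |>.mul continuous_const |>.div_const 2).continuousOn
    · intro s _
      apply DifferentiableAt.differentiableWithinAt
      apply DifferentiableAt.sub
      · exact (((Real.differentiable_cosh.comp
          (differentiable_id.mul_const x)) s).log (Real.cosh_pos _).ne')
      · fun_prop
    · intro s hs
      rw [interior_Ici, Set.mem_Ioi] at hs
      have h1 : HasDerivAt (fun s : ℝ => s * x) x s := hasDerivAt_mul_const x
      have h2 : HasDerivAt (fun s : ℝ => Real.cosh (s * x)) (Real.sinh (s * x) * x) s :=
        h1.cosh
      have h3 : HasDerivAt (fun s : ℝ => Real.log (Real.cosh (s * x)))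
          (Real.sinh (s * x) * x / Real.cosh (s * x)) s := h2.log (Real.cosh_pos _).ne'
      have h4 : HasDerivAt (fun s : ℝ => s ^ 2 * x ^ 2 / 2) ((2 : ℕ) * s ^ 1 * x ^ 2 / 2) s :=
        ((hasDerivAt_pow 2 s).mul_const (x ^ 2)).div_const 2
      have hd : HasDerivAt (fun s : ℝ => Real.log (Real.cosh (s * x)) - s ^ 2 * x ^ 2 / 2)
          (Real.sinh (s * x) * x / Real.cosh (s * x) - (2 : ℕ) * s ^ 1 * x ^ 2 / 2) s :=
        h3.sub h4
      rw [hd.deriv]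
      have hsx : 0 ≤ s * x := mul_nonneg hs.le hx
      have hb := sinh_le_mul_cosh hsx
      have hcp := Real.cosh_pos (s * x)
      have h5 : Real.sinh (s * x) * x / Real.cosh (s * x) ≤ s * x ^ 2 := by
        rw [div_le_iff₀ hcp]; nlinarith
      simp only [pow_one, Nat.cast_ofNat]
      nlinarith
  have key := hanti (Set.mem_Ici.2 hd) (Set.mem_Ici.2 (hd.trans hdc)) hdc
  simp only [sub_le_sub_iff] at key
  have hlog : Real.log (Real.cosh (c * x)) ≤
      Real.log (Real.cosh (d * x)) + (c ^ 2 - d ^ 2) * x ^ 2 / 2 := by linarith [key]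
  calc Real.cosh (c * x) = Real.exp (Real.log (Real.cosh (c * x))) :=
        (Real.exp_log (Real.cosh_pos _)).symm
    _ ≤ Real.exp (Real.log (Real.cosh (d * x)) + (c ^ 2 - d ^ 2) * x ^ 2 / 2) :=
        Real.exp_le_exp.2 hlog
    _ = Real.cosh (d * x) * Real.exp ((c ^ 2 - d ^ 2) * x ^ 2 / 2) := by
        rw [Real.exp_add, Real.exp_log (Real.cosh_pos _)]

lemma key_integral_bound {Ω : Type*} [MeasurableSpace Ω] (ν : Measure Ω)
    [IsProbabilityMeasure ν] (r : Ω → ℝ) (hrmeas : Measurable r) (ε α : ℝ)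
    (hεpos : 0 < ε) (hα : 1 < α)
    (hub : ∀ᵐ x ∂ν, r x ≤ Real.exp ε) (hlb : ∀ᵐ x ∂ν, Real.exp (-ε) ≤ r x)
    (hint1 : ∫ x, r x ∂ν = 1) (hintr : Integrable r ν) :
    ∫ x, r x ^ α ∂ν ≤ Real.exp (α * (α - 1) * ε ^ 2 / 2) ∧ 0 < ∫ x, r x ^ α ∂ν := by
  set a := Real.exp (-ε) with ha_def
  set b := Real.exp ε with hb_def
  have hab : a < b := Real.exp_lt_exp.2 (by linarith)
  have hane : (0:ℝ) < a := Real.exp_pos _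
  have hbne : (0:ℝ) < b := Real.exp_pos _
  have hba : (0:ℝ) < b - a := by linarith
  have hα0 : (0:ℝ) ≤ α := by linarith
  -- measurability / integrability
  have hmeasα : AEStronglyMeasurable (fun x => r x ^ α) ν := by
    have : Measurable (fun x => r x ^ α) := by measurability
    exact this.aestronglyMeasurable
  have hintα : Integrable (fun x => r x ^ α) ν := by
    apply Integrable.mono' (integrable_const (b ^ α)) hmeasα
    filter_upwards [hub, hlb] with x h1 h2
    have hx0 : 0 ≤ r x := le_trans hane.le h2
    rw [Real.norm_eq_abs, abs_of_nonneg (Real.rpow_nonneg hx0 α)]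
    exact Real.rpow_le_rpow hx0 h1 hα0
  -- chord bound
  have hconv := convexOn_rpow (le_of_lt hα)
  have hchord : ∀ᵐ x ∂ν, r x ^ α ≤
      (b * a ^ α - a * b ^ α) / (b - a) + ((b ^ α - a ^ α) / (b - a)) * r x := by
    filter_upwards [hub, hlb] with x h1 h2
    set t := r x with ht_def
    have hw1 : (0:ℝ) ≤ (b - t) / (b - a) := div_nonneg (by linarith) hba.le
    have hw2 : (0:ℝ) ≤ (t - a) / (b - a) := div_nonneg (by linarith) hba.le
    have hsum : (b - t) / (b - a) + (t - a) / (b - a) = 1 := by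
      field_simp
      ring
    have h4 := hconv.2 (Set.mem_Ici.2 hane.le) (Set.mem_Ici.2 hbne.le) hw1 hw2 hsum
    simp only [smul_eq_mul] at h4
    have h5 : (b - t) / (b - a) * a + (t - a) / (b - a) * b = t := by
      field_simp; ring
    rw [h5] at h4
    calc t ^ α ≤ (b - t) / (b - a) * a ^ α + (t - a) / (b - a) * b ^ α := h4
      _ = (b * a ^ α - a * b ^ α) / (b - a) + ((b ^ α - a ^ α) / (b - a)) * t := by
          field_simp; ring
  -- integrate the chord bound
  have hIle : ∫ x, r x ^ α ∂ν ≤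
      (b * a ^ α - a * b ^ α) / (b - a) + (b ^ α - a ^ α) / (b - a) := by
    have hInt2 : Integrable
        (fun x => (b * a ^ α - a * b ^ α) / (b - a) + ((b ^ α - a ^ α) / (b - a)) * r x) ν :=
      (integrable_const _).add (hintr.const_mul _)
    calc ∫ x, r x ^ α ∂ν
        ≤ ∫ x, ((b * a ^ α - a * b ^ α) / (b - a) + ((b ^ α - a ^ α) / (b - a)) * r x) ∂ν :=
          integral_mono_ae hintα hInt2 hchord
      _ = (b * a ^ α - a * b ^ α) / (b - a) + (b ^ α - a ^ α) / (b - a) := by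
          rw [integral_add (integrable_const _) (hintr.const_mul _), integral_const,
            integral_const_mul, hint1]
          simp
  -- positivity
  have hIpos : 0 < ∫ x, r x ^ α ∂ν := by
    have hpt : ∀ᵐ x ∂ν, a ^ α ≤ r x ^ α := by
      filter_upwards [hlb] with x h2
      exact Real.rpow_le_rpow hane.le h2 hα0
    have : a ^ α ≤ ∫ x, r x ^ α ∂ν := by
      calc a ^ α = ∫ _x, a ^ α ∂ν := by simp
        _ ≤ _ := integral_mono_ae (integrable_const _) hintα hpt
    exact lt_of_lt_of_le (Real.rpow_pos_of_pos hane α) this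
  refine ⟨?_, hIpos⟩
  -- rewrite bound in terms of u, v
  set u := Real.exp (ε / 2) with hu_def
  set v := Real.exp ((α - 1/2) * ε) with hv_def
  have hu0 : (0:ℝ) < u := Real.exp_pos _
  have hv0 : (0:ℝ) < v := Real.exp_pos _
  have hb_u : b = u * u := by rw [hb_def, hu_def, ← Real.exp_add]; ring_nf
  have ha_u : a = (u * u)⁻¹ := by
    rw [ha_def, hu_def, ← Real.exp_add, ← Real.exp_neg]; ring_nf
  have hbα : b ^ α = u * v := by
    rw [hb_def, ← Real.exp_mul, hu_def, hv_def, ← Real.exp_add]; ring_nf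
  have haα : a ^ α = (u * v)⁻¹ := by
    rw [ha_def, ← Real.exp_mul, hu_def, hv_def, ← Real.exp_add, ← Real.exp_neg]; ring_nf
  have hba_ne : b - a ≠ 0 := hba.ne'
  have hiden : (b * a ^ α - a * b ^ α) / (b - a) + (b ^ α - a ^ α) / (b - a)
      = (v + v⁻¹) / (u + u⁻¹) := by
    rw [hbα, haα]
    rw [← add_div, div_eq_div_iff hba_ne (by positivity)]
    rw [hb_u, ha_u]
    field_simp
    ring
  -- cosh bound
  have hcosh : v + v⁻¹ ≤ (u + u⁻¹) * Real.exp (α * (α - 1) * ε ^ 2 / 2) := by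
    have hkey := cosh_mul_le (x := ε) (c := α - 1/2) (d := 1/2) hεpos.le (by norm_num)
      (by linarith)
    rw [Real.cosh_eq, Real.cosh_eq] at hkey
    have e1 : Real.exp ((α - 1/2) * ε) = v := rfl
    have e2 : Real.exp (-((α - 1/2) * ε)) = v⁻¹ := by rw [Real.exp_neg]
    have e3 : Real.exp (1/2 * ε) = u := by rw [hu_def]; ring_nf
    have e4 : Real.exp (-(1/2 * ε)) = u⁻¹ := by rw [Real.exp_neg, e3]
    rw [e1, e2, e3, e4] at hkey
    have e5 : ((α - 1/2) ^ 2 - (1/2 : ℝ) ^ 2) * ε ^ 2 / 2 = α * (α - 1) * ε ^ 2 / 2 := by ring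
    rw [e5] at hkey
    linarith
  have hfinal : (v + v⁻¹) / (u + u⁻¹) ≤ Real.exp (α * (α - 1) * ε ^ 2 / 2) := by
    rw [div_le_iff₀ (by positivity)]
    linarith [hcosh]
  calc ∫ x, r x ^ α ∂ν ≤ _ := hIle
    _ = (v + v⁻¹) / (u + u⁻¹) := hiden
    _ ≤ _ := hfinal

/-- Rényi divergence of order `α`. -/
noncomputable def renyiDiv {Ω : Type*} [MeasurableSpace Ω] (α : ℝ) (μ ν : Measure Ω) : ℝ :=
  (α - 1)⁻¹ * Real.log (∫ x, ((μ.rnDeriv ν) x).toReal ^ α ∂ν)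

/-- DP-to-zCDP conversion (Bun–Steinke): if the likelihood ratio between the output
distributions `μ, ν` on neighboring datasets is bounded, `e^{-ε} ≤ dμ/dν ≤ e^{ε}`
(pure `ε`-DP), then for every `α > 1` the order-`α` Rényi divergence is at most `αε²/2`. -/
theorem pure_dp_implies_rdp {Ω : Type*} [MeasurableSpace Ω] (μ ν : Measure Ω)
    [IsProbabilityMeasure μ] [IsProbabilityMeasure ν]
    (hac : μ ≪ ν) (hac' : ν ≪ μ) (ε : ℝ) (hε : 0 ≤ ε)
    (hub : ∀ᵐ x ∂ν, ((μ.rnDeriv ν) x).toReal ≤ Real.exp ε)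
    (hlb : ∀ᵐ x ∂ν, Real.exp (-ε) ≤ ((μ.rnDeriv ν) x).toReal)
    (α : ℝ) (hα : 1 < α) :
    renyiDiv α μ ν ≤ α * ε ^ 2 / 2 := by
  have hα1 : (0:ℝ) < α - 1 := by linarith
  rcases eq_or_lt_of_le hε with h0 | hεpos
  · -- ε = 0
    have hone : ∀ᵐ x ∂ν, ((μ.rnDeriv ν) x).toReal ^ α = 1 := by
      filter_upwards [hub, hlb] with x h1 h2
      rw [← h0] at h1 h2
      simp only [neg_zero, Real.exp_zero] at h1 h2
      rw [le_antisymm h1 h2, Real.one_rpow]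
    rw [renyiDiv, integral_congr_ae hone]
    simp [← h0]
  · -- ε > 0
    have hrmeas : Measurable (fun x => ((μ.rnDeriv ν) x).toReal) :=
      (Measure.measurable_rnDeriv μ ν).ennreal_toReal
    have hint1 : ∫ x, ((μ.rnDeriv ν) x).toReal ∂ν = 1 := by
      rw [Measure.integral_toReal_rnDeriv hac]; simp
    have hintr : Integrable (fun x => ((μ.rnDeriv ν) x).toReal) ν :=
      Measure.integrable_toReal_rnDeriv
    obtain ⟨hle, hpos⟩ := key_integral_bound ν _ hrmeas ε α hεpos hα hub hlb hint1 hintr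
    rw [renyiDiv]
    have hlog : Real.log (∫ x, ((μ.rnDeriv ν) x).toReal ^ α ∂ν) ≤ α * (α - 1) * ε ^ 2 / 2 :=
      (Real.log_le_iff_le_exp hpos).2 hle
    calc (α - 1)⁻¹ * Real.log (∫ x, ((μ.rnDeriv ν) x).toReal ^ α ∂ν)
        ≤ (α - 1)⁻¹ * (α * (α - 1) * ε ^ 2 / 2) :=
          mul_le_mul_of_nonneg_left hlog (by positivity)
      _ = α * ε ^ 2 / 2 := by field_simp
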